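/- Fix c > 1 and let Aut(g_c) = { [[β-α, -cα, x],[α, β+α, y],[0,0,1]] : α,β,x,y ∈ R, β²+(c-1)α² ≠ 0 }. For τ > 1 and μ > 0, the matrix [[1,1,0],[1,τ,0],[0,0,μ]] is Aut(g_c)-congruent to [[1,1,0],[1,τ',0],[0,0,μ]] where τ' = 1 + (c-1)²/(τ-1). -/
import Mathlib


open Matrix

/-- Membership in `Aut(g_c)`. -/
def InAutGc (c : ℝ) (B : Matrix (Fin 3) (Fin 3) ℝ) : Prop :=
  ∃ α β x y : ℝ, β ^ 2 + (c - 1) * α ^ 2 ≠ 0 ∧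
    B = !![β - α, -(c * α), x; α, β + α, y; 0, 0, 1]

theorem stmt_13 (c τ μ : ℝ) (hc : 1 < c) (hτ : 1 < τ) (hμ : 0 < μ) :
    ∃ B, InAutGc c B ∧
      Bᵀ * !![1, 1, 0; 1, τ, 0; 0, 0, μ] * B
        = !![1, 1, 0; 1, 1 + (c - 1) ^ 2 / (τ - 1), 0; 0, 0, μ] := by
  have hτ1 : (0:ℝ) < τ - 1 := by linarith
  set α : ℝ := 1 / Real.sqrt (τ - 1) with hα
  have hα2 : α ^ 2 = (τ - 1)⁻¹ := by
    rw [hα, div_pow, one_pow, Real.sq_sqrt hτ1.le, one_div]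
  refine ⟨!![0 - α, -(c * α), 0; α, 0 + α, 0; 0, 0, 1], ⟨α, 0, 0, 0, ?_, rfl⟩, ?_⟩
  · have : (c - 1) * α ^ 2 > 0 := by
      rw [hα2]; exact mul_pos (by linarith) (inv_pos.mpr hτ1)
    nlinarith
  · have hα2' : α ^ 2 * (τ - 1) = 1 := by
      rw [hα2]; field_simp
    ext i j
    fin_cases i <;> fin_cases j <;>
      simp [Matrix.mul_apply, Fin.sum_univ_succ, Matrix.transpose_apply]
    · linear_combination hα2'
    · linear_combination hα2'
    · linear_combination hα2'
    · have h1 : τ - 1 ≠ 0 := by linarith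
      field_simp
      linear_combination (c ^ 2 - 2 * c + τ) * hα2'
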